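/- As ε → 0⁺, the solutions u^ε converge to u⁰ in H, i.e. lim_{ε→0⁺} ‖u^ε − u⁰‖_H = 0. -/

import Mathlib

open RealInnerProductSpace Filter Topology

set_option maxHeartbeats 1200000 in
/-- As ε → 0⁺, the solutions u^ε converge to u⁰ in H,
i.e. lim_{ε→0⁺} ‖u^ε − u⁰‖_H = 0. -/
theorem stmt_4
    {H U V : Type*}
    [NormedAddCommGroup H] [InnerProductSpace ℝ H] [CompleteSpace H]
    [NormedAddCommGroup U] [InnerProductSpace ℝ U] [CompleteSpace U]
    [NormedAddCommGroup V] [InnerProductSpace ℝ V] [CompleteSpace V]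
    (A : H →L[ℝ] U) (B : H →L[ℝ] V)
    (c₁ c₂ : ℝ) (hc₁ : 0 < c₁) (hc₂ : 0 < c₂)
    (hlow : ∀ v : H, c₁ * ‖v‖ ≤ ‖A v‖ + ‖B v‖)
    (hup : ∀ v : H, ‖A v‖ + ‖B v‖ ≤ c₂ * ‖v‖)
    (f : H →L[ℝ] ℝ)
    (u : ℝ → H)
    (hu : ∀ ε : ℝ, 0 < ε → ∀ v : H,
      ⟪A (u ε), A v⟫ + (ε ^ 2)⁻¹ * ⟪B (u ε), B v⟫ = f v)
    (u₀ : H) (hu₀ : B u₀ = 0)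
    (hu₀' : ∀ v : H, B v = 0 → ⟪A u₀, A v⟫ = f v) :
    Tendsto (fun ε : ℝ => ‖u ε - u₀‖) (𝓝[>] 0) (𝓝 0) := by
  classical
  -- The residual functional v ↦ f v - ⟪A u₀, A v⟫ is represented by h
  set h : H := (InnerProductSpace.toDual ℝ H).symm f - (ContinuousLinearMap.adjoint A) (A u₀)
    with hh
  have hrep : ∀ v : H, ⟪h, v⟫ = f v - ⟪A u₀, A v⟫ := by
    intro v
    simp [hh, inner_sub_left, InnerProductSpace.toDual_symm_apply,
      ContinuousLinearMap.adjoint_inner_left]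
  -- h is orthogonal to ker B
  have hker : ∀ v : H, B v = 0 → ⟪h, v⟫ = 0 := by
    intro v hv
    rw [hrep, hu₀' v hv]; ring
  -- ker B = (range B†)ᗮ, so h ∈ closure (range B†)
  have hkr : (LinearMap.ker (B : H →ₗ[ℝ] V) : Submodule ℝ H)
      = (LinearMap.range (ContinuousLinearMap.adjoint B : V →ₗ[ℝ] H))ᗮ := by
    ext v
    simp only [LinearMap.mem_ker, Submodule.mem_orthogonal, LinearMap.mem_range,
      ContinuousLinearMap.coe_coe, forall_exists_index]
    constructor
    · rintro hv _ y rfl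
      rw [ContinuousLinearMap.adjoint_inner_left, hv, inner_zero_right]
    · intro hv
      have : ⟪B v, B v⟫ = 0 := by
        rw [← ContinuousLinearMap.adjoint_inner_left]
        exact hv _ (B v) rfl
      exact inner_self_eq_zero.mp this
  clear_value h
  have hmemo : h ∈ (LinearMap.ker (B : H →ₗ[ℝ] V) : Submodule ℝ H)ᗮ := by
    intro v hv
    rw [real_inner_comm]
    exact hker v hv
  have hclos : h ∈ closure ((LinearMap.range (ContinuousLinearMap.adjoint B : V →ₗ[ℝ] H) :
      Submodule ℝ H) : Set H) := by
    have := hmemo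
    rw [hkr, Submodule.orthogonal_orthogonal_eq_closure] at this
    exact this
  -- main estimate: for 0 < ε ≤ 1 and any y,
  -- ‖u ε - u₀‖ ≤ (2/c₁) * ((2/c₁) * ‖h - B† y‖ + ε * ‖y‖)
  have key : ∀ ε : ℝ, 0 < ε → ε ≤ 1 → ∀ y : V,
      ‖u ε - u₀‖ ≤ (2 / c₁) * ((2 / c₁) * ‖h - (ContinuousLinearMap.adjoint B) y‖ + ε * ‖y‖) := by
    intro ε hε hε1 y
    set e : H := u ε - u₀ with he
    have hBe : B e = B (u ε) := by simp [he, map_sub, hu₀]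
    set a : ℝ := ‖A e‖ ^ 2 + (ε ^ 2)⁻¹ * ‖B e‖ ^ 2 with ha
    have ha0 : 0 ≤ a := by positivity
    -- identity a = ⟪h, e⟫
    have hid : a = ⟪h, e⟫ := by
      have h1 := hu ε hε e
      have h2 : ⟪A (u ε), A e⟫ = ‖A e‖ ^ 2 + ⟪A u₀, A e⟫ := by
        have : A (u ε) = A e + A u₀ := by simp [he, map_sub]
        rw [this, inner_add_left, real_inner_self_eq_norm_sq]
      have h3 : ⟪B (u ε), B e⟫ = ‖B e‖ ^ 2 := by
        rw [← hBe, real_inner_self_eq_norm_sq]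
      rw [hrep, ← h1, h2, h3]
      ring
    -- bounds
    have hAe : ‖A e‖ ≤ Real.sqrt a := by
      rw [← Real.sqrt_sq (norm_nonneg _)]
      apply Real.sqrt_le_sqrt
      rw [ha]
      have : 0 ≤ (ε ^ 2)⁻¹ * ‖B e‖ ^ 2 := by positivity
      linarith
    have hBe2 : ‖B e‖ ≤ ε * Real.sqrt a := by
      have h4 : ((ε)⁻¹ * ‖B e‖) ^ 2 ≤ a := by
        have : ((ε)⁻¹ * ‖B e‖) ^ 2 = (ε ^ 2)⁻¹ * ‖B e‖ ^ 2 := by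
          rw [mul_pow]; ring_nf
        rw [this, ha]
        have : 0 ≤ ‖A e‖ ^ 2 := sq_nonneg _
        linarith
      have h5 : (ε)⁻¹ * ‖B e‖ ≤ Real.sqrt a := by
        rw [← Real.sqrt_sq (by positivity : (0:ℝ) ≤ (ε)⁻¹ * ‖B e‖)]
        exact Real.sqrt_le_sqrt h4
      calc ‖B e‖ = ε * ((ε)⁻¹ * ‖B e‖) := by field_simp
        _ ≤ ε * Real.sqrt a := by
            exact mul_le_mul_of_nonneg_left h5 hε.le
    have hsa : 0 ≤ Real.sqrt a := Real.sqrt_nonneg a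
    have hnorme : ‖e‖ ≤ (2 / c₁) * Real.sqrt a := by
      have := hlow e
      have h6 : ‖A e‖ + ‖B e‖ ≤ (1 + ε) * Real.sqrt a := by nlinarith
      have h7 : (1 + ε) * Real.sqrt a ≤ 2 * Real.sqrt a := by nlinarith
      have h8 : c₁ * ‖e‖ ≤ 2 * Real.sqrt a := by linarith
      rw [div_mul_eq_mul_div, le_div_iff₀ hc₁]
      linarith [h8]
    clear_value a
    -- a ≤ (‖h - B†y‖ (2/c₁) + ε‖y‖) √a
    have hsplit : a ≤ ((2 / c₁) * ‖h - (ContinuousLinearMap.adjoint B) y‖ + ε * ‖y‖)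
        * Real.sqrt a := by
      have h9 : a = ⟪h - (ContinuousLinearMap.adjoint B) y, e⟫ + ⟪y, B e⟫ := by
        rw [hid, inner_sub_left, ContinuousLinearMap.adjoint_inner_left]
        ring
      have h10 : ⟪h - (ContinuousLinearMap.adjoint B) y, e⟫
          ≤ ‖h - (ContinuousLinearMap.adjoint B) y‖ * ‖e‖ := real_inner_le_norm _ _
      have h11 : ⟪y, B e⟫ ≤ ‖y‖ * ‖B e‖ := real_inner_le_norm _ _
      have h12 : ‖h - (ContinuousLinearMap.adjoint B) y‖ * ‖e‖
          ≤ ‖h - (ContinuousLinearMap.adjoint B) y‖ * ((2 / c₁) * Real.sqrt a) :=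
        mul_le_mul_of_nonneg_left hnorme (norm_nonneg _)
      have h13 : ‖y‖ * ‖B e‖ ≤ ‖y‖ * (ε * Real.sqrt a) :=
        mul_le_mul_of_nonneg_left hBe2 (norm_nonneg _)
      calc a = ⟪h - (ContinuousLinearMap.adjoint B) y, e⟫ + ⟪y, B e⟫ := h9
        _ ≤ ‖h - (ContinuousLinearMap.adjoint B) y‖ * ((2 / c₁) * Real.sqrt a)
            + ‖y‖ * (ε * Real.sqrt a) := by linarith
        _ = ((2 / c₁) * ‖h - (ContinuousLinearMap.adjoint B) y‖ + ε * ‖y‖) * Real.sqrt a := by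
            ring
    have hsqa : Real.sqrt a ≤ (2 / c₁) * ‖h - (ContinuousLinearMap.adjoint B) y‖ + ε * ‖y‖ := by
      rcases eq_or_lt_of_le hsa with h0 | h0
      · rw [← h0]; positivity
      · have : Real.sqrt a * Real.sqrt a = a := Real.mul_self_sqrt ha0
        nlinarith
    calc ‖e‖ ≤ (2 / c₁) * Real.sqrt a := hnorme
      _ ≤ (2 / c₁) * ((2 / c₁) * ‖h - (ContinuousLinearMap.adjoint B) y‖ + ε * ‖y‖) := by
          apply mul_le_mul_of_nonneg_left hsqa (by positivity)
  -- conclude via ε-δ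
  rw [Metric.tendsto_nhds]
  intro δ hδ
  -- choose y close to h
  obtain ⟨z, hz, hzd⟩ := Metric.mem_closure_iff.mp hclos (c₁ ^ 2 * δ / 16) (by positivity)
  obtain ⟨y, rfl⟩ := hz
  set M : ℝ := ‖(y : V)‖ + 1 with hM
  have hM0 : 0 < M := by rw [hM]; positivity
  clear_value M
  have hdist : ‖h - (ContinuousLinearMap.adjoint B) y‖ < c₁ ^ 2 * δ / 16 := by
    rw [← dist_eq_norm]; exact hzd
  set ε₀ : ℝ := min 1 (c₁ * δ / (8 * M)) with hε₀
  have hε₀pos : 0 < ε₀ := lt_min one_pos (by positivity)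
  filter_upwards [Ioo_mem_nhdsGT_of_mem (Set.mem_Ico.mpr ⟨le_refl 0, hε₀pos⟩)] with ε hε
  obtain ⟨hε1, hε2⟩ := hε
  have hε3 : ε ≤ 1 := le_of_lt (lt_of_lt_of_le hε2 (min_le_left _ _))
  have hεM : ε * ‖(y : V)‖ ≤ c₁ * δ / 8 := by
    have h1 : ε < c₁ * δ / (8 * M) := lt_of_lt_of_le hε2 (min_le_right _ _)
    have h2 : ε * ‖(y : V)‖ ≤ ε * M := by
      apply mul_le_mul_of_nonneg_left _ hε1.le
      rw [hM]
      linarith [norm_nonneg (y : V)]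
    have h3 : ε * M ≤ c₁ * δ / (8 * M) * M := mul_le_mul_of_nonneg_right h1.le hM0.le
    have h4 : c₁ * δ / (8 * M) * M = c₁ * δ / 8 := by field_simp
    linarith
  have hkey := key ε hε1 hε3 y
  have hc1d : (2 / c₁) * ‖h - (ContinuousLinearMap.adjoint B) y‖ ≤ c₁ * δ / 8 := by
    have : (2 / c₁) * ‖h - (ContinuousLinearMap.adjoint B) y‖
        ≤ (2 / c₁) * (c₁ ^ 2 * δ / 16) := by
      apply mul_le_mul_of_nonneg_left hdist.le (by positivity)
    have h5 : (2 / c₁) * (c₁ ^ 2 * δ / 16) = c₁ * δ / 8 := by field_simp; ring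
    linarith
  have hfinal : ‖u ε - u₀‖ ≤ (2 / c₁) * (c₁ * δ / 8 + c₁ * δ / 8) := by
    refine le_trans hkey ?_
    apply mul_le_mul_of_nonneg_left _ (by positivity)
    linarith
  have h6 : (2 / c₁) * (c₁ * δ / 8 + c₁ * δ / 8) = δ / 2 := by field_simp; ring
  rw [Real.dist_eq, sub_zero, abs_of_nonneg (norm_nonneg _)]
  linarith
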